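/- If U(s) = 1/(1 + k·e^{s/√6})² with k > 0, then U satisfies the polynomial relation 3(U'(s))² + 2√6 U(s)U'(s) + 2(1 - U(s))U(s)² = 0 for all real s. -/

import Mathlib

set_option maxHeartbeats 1000000 in
lemma az_key (k e : ℝ) (hs6 : Real.sqrt 6 * Real.sqrt 6 = 6) (h6 : (0:ℝ) < Real.sqrt 6)
    (hfne : (1 + k * e) ≠ 0) :
    3 * (-(2 * (k * (e / Real.sqrt 6))) / (1 + k * e) ^ 3) ^ 2
      + 2 * Real.sqrt 6 * (1 / (1 + k * e) ^ 2) * (-(2 * (k * (e / Real.sqrt 6))) / (1 + k * e) ^ 3)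
      + 2 * (1 - 1 / (1 + k * e) ^ 2) * (1 / (1 + k * e) ^ 2) ^ 2 = 0 := by
  have h6' : Real.sqrt 6 ≠ 0 := ne_of_gt h6
  field_simp
  ring_nf
  rw [show Real.sqrt 6 ^ 2 = Real.sqrt 6 * Real.sqrt 6 by ring, hs6]
  ring

set_option maxHeartbeats 1000000 in
theorem ablowitz_zeppetella_algebraic (k : ℝ) (hk : 0 < k) (U : ℝ → ℝ)
    (hU : ∀ s, U s = 1 / (1 + k * Real.exp (s / Real.sqrt 6)) ^ 2) :
    ∀ s : ℝ,
      3 * (deriv U s) ^ 2 + 2 * Real.sqrt 6 * U s * deriv U s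
        + 2 * (1 - U s) * (U s) ^ 2 = 0 := by
  intro s
  have h6 : (0:ℝ) < Real.sqrt 6 := Real.sqrt_pos.mpr (by norm_num)
  have hs6 : Real.sqrt 6 * Real.sqrt 6 = 6 := Real.mul_self_sqrt (by norm_num)
  set e := Real.exp (s / Real.sqrt 6) with he
  have hepos : 0 < e := Real.exp_pos _
  have hfpos : 0 < 1 + k * e := by positivity
  have hfne : (1 + k * e) ≠ 0 := ne_of_gt hfpos
  -- derivative of inner function
  have hinner : HasDerivAt (fun s => 1 + k * Real.exp (s / Real.sqrt 6))
      (k * (e / Real.sqrt 6)) s := by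
    have h1 : HasDerivAt (fun s : ℝ => s / Real.sqrt 6) (1 / Real.sqrt 6) s := by
      simpa using (hasDerivAt_id s).div_const (Real.sqrt 6)
    have h2 := (h1.exp)
    have h3 := (h2.const_mul k).const_add 1
    simpa [he, mul_comm, mul_left_comm, div_eq_mul_inv] using h3
  have hU' : HasDerivAt U (-(2 * (k * (e / Real.sqrt 6))) / (1 + k * e) ^ 3) s := by
    have h4 : HasDerivAt (fun s => ((1 + k * Real.exp (s / Real.sqrt 6)) ^ 2 : ℝ))
        (2 * (1 + k * e) * (k * (e / Real.sqrt 6))) s := by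
      simpa [pow_two, mul_comm, mul_left_comm, mul_assoc] using
        (hinner.fun_pow 2 : HasDerivAt _ (2 * (1 + k * e) ^ (2-1) * (k * (e / Real.sqrt 6))) s)
    have h5 := h4.fun_inv (by positivity)
    have : U = fun s => ((1 + k * Real.exp (s / Real.sqrt 6)) ^ 2 : ℝ)⁻¹ := by
      funext t; rw [hU t]; rw [one_div]
    rw [this]
    refine h5.congr_deriv ?_
    rw [div_eq_div_iff (by positivity) (pow_ne_zero 3 hfne)]
    simp only [he]
    ring
  have hd : deriv U s = -(2 * (k * (e / Real.sqrt 6))) / (1 + k * e) ^ 3 := hU'.deriv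
  rw [hd, hU s, ← he]
  exact az_key k e hs6 h6 hfne
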